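/- Let X be a finite set and x₁, …, x_T a sequence in X with T = M·τ for positive integers M (number of episodes) and τ (episode length); set t_k := (k−1)·τ so that episode k consists of the times t_k+1, …, t_k+τ. For t, and x ∈ X, let n_t(x) := |{s ∈ {1,…,t−1} : x_s = x}|. Fix d > 0 and ε > 0, let h(d,ε) := √(d·ε²/(d+ε²)), and let h^{(τ)}(d,ε) be the τ-fold composition of ε ↦ h(d,ε) applied to ε. Then |{ (k,i) : 1 ≤ k ≤ M, 1 ≤ i ≤ τ, n_{t_k}(x_{t_k+i}) = 0 or d > n_{t_k}(x_{t_k+i})·h^{(τ)}(d,ε)² }| ≤ |{ (k,i) : 1 ≤ k ≤ M, 1 ≤ i ≤ τ, n_{t_k}(x_{t_k+i}) = 0 or d > n_{t_k}(x_{t_k+i})·ε² }| + 2·τ·|X|. -/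

import Mathlib

open Finset
open scoped Classical

private lemma hfun_pos {d : ℝ} (hd : 0 < d) (j : ℕ) {e : ℝ} (he : 0 < e) :
    0 < (fun e : ℝ => Real.sqrt (d * e ^ 2 / (d + e ^ 2)))^[j] e := by
  induction j generalizing e with
  | zero => simpa using he
  | succ n ih =>
    rw [Function.iterate_succ_apply]
    exact ih (by positivity)

private lemma step_iff {d : ℝ} (hd : 0 < d) {c : ℝ} (hc : 0 < c) (r : ℝ) :
    d > r * (Real.sqrt (d * c ^ 2 / (d + c ^ 2))) ^ 2 ↔ d > (r - 1) * c ^ 2 := by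
  have hden : 0 < d + c ^ 2 := by positivity
  rw [Real.sq_sqrt (by positivity)]
  rw [gt_iff_lt, gt_iff_lt,
    show r * (d * c ^ 2 / (d + c ^ 2)) = r * (d * c ^ 2) / (d + c ^ 2) by ring,
    div_lt_iff₀ hden]
  constructor <;> intro h
  · nlinarith [mul_pos hd (pow_pos hc 2), mul_pos hd hd]
  · nlinarith [mul_pos hd (sub_pos.mpr h)]

private lemma iter_iff {d ε : ℝ} (hd : 0 < d) (hε : 0 < ε) (j : ℕ) (r : ℝ) :
    d > r * ((fun e : ℝ => Real.sqrt (d * e ^ 2 / (d + e ^ 2)))^[j] ε) ^ 2 ↔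
      d > (r - j) * ε ^ 2 := by
  induction j generalizing r with
  | zero => simp
  | succ n ih =>
    rw [Function.iterate_succ_apply']
    rw [step_iff hd (hfun_pos hd n hε) r, ih (r - 1)]
    push_cast
    constructor <;> intro h <;> nlinarith [sq_nonneg ε]

private noncomputable def cnt {X : Type*} (x : ℕ → X) (y : X) (t : ℕ) : ℕ :=
  ((Finset.Icc 1 t).filter (fun s => x s = y)).card

private lemma cnt_zero {X : Type*} (x : ℕ → X) (y : X) : cnt x y 0 = 0 := by
  simp [cnt]

private lemma cnt_mono {X : Type*} (x : ℕ → X) (y : X) {a b : ℕ} (h : a ≤ b) :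
    cnt x y a ≤ cnt x y b :=
  Finset.card_le_card (Finset.filter_subset_filter _ (Finset.Icc_subset_Icc_right h))

private lemma cnt_visit {X : Type*} (x : ℕ → X) (y : X) {t : ℕ} (ht : 1 ≤ t)
    (hx : x t = y) : cnt x y (t - 1) + 1 ≤ cnt x y t := by
  have hnot : t ∉ (Finset.Icc 1 (t - 1)).filter (fun s => x s = y) := by
    simp only [Finset.mem_filter, Finset.mem_Icc]
    omega
  have hsub : insert t ((Finset.Icc 1 (t - 1)).filter (fun s => x s = y)) ⊆
      (Finset.Icc 1 t).filter (fun s => x s = y) := by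
    intro s hs
    rcases Finset.mem_insert.mp hs with rfl | hs
    · simp [Finset.mem_filter, Finset.mem_Icc, ht, hx]
    · simp only [Finset.mem_filter, Finset.mem_Icc] at hs ⊢
      exact ⟨⟨hs.1.1, by omega⟩, hs.2⟩
  calc cnt x y (t - 1) + 1
      = (insert t ((Finset.Icc 1 (t - 1)).filter (fun s => x s = y))).card := by
        rw [Finset.card_insert_of_notMem hnot, cnt]
    _ ≤ _ := Finset.card_le_card hsub

private lemma cnt_lip {X : Type*} (x : ℕ → X) (y : X) (t j : ℕ) :
    cnt x y (t + j) ≤ cnt x y t + j := by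
  have hsub : (Finset.Icc 1 (t + j)).filter (fun s => x s = y) ⊆
      ((Finset.Icc 1 t).filter (fun s => x s = y)) ∪ Finset.Icc (t + 1) (t + j) := by
    intro s hs
    simp only [Finset.mem_filter, Finset.mem_Icc, Finset.mem_union] at hs ⊢
    rcases le_or_gt s t with h | h
    · exact Or.inl ⟨⟨hs.1.1, h⟩, hs.2⟩
    · exact Or.inr ⟨by omega, hs.1.2⟩
  calc cnt x y (t + j) ≤ _ := Finset.card_le_card hsub
    _ ≤ cnt x y t + (Finset.Icc (t + 1) (t + j)).card := Finset.card_union_le _ _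
    _ ≤ cnt x y t + j := by rw [Nat.card_Icc]; omega

private lemma cnt_strict {X : Type*} (x : ℕ → X) (y : X) {a b : ℕ} (h : a < b)
    (hx : x b = y) : cnt x y a < cnt x y b := by
  have h1 := cnt_mono x y (show a ≤ b - 1 by omega)
  have h2 := cnt_visit x y (show 1 ≤ b by omega) hx
  omega

private lemma Ico_count {X : Type*} (x : ℕ → X) (y : X) (t : ℕ) :
    ((Finset.Ico 1 t).filter (fun s => x s = y)).card = cnt x y (t - 1) := by
  rcases t with _ | s
  · simp [cnt]
  · rw [Finset.Ico_add_one_right_eq_Icc]; rfl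

private lemma idx_inj {τ : ℕ} {k k' i i' : ℕ} (hk : 1 ≤ k) (hk' : 1 ≤ k')
    (hi1 : 1 ≤ i) (hi2 : i ≤ τ) (hi1' : 1 ≤ i') (hi2' : i' ≤ τ)
    (h : (k - 1) * τ + i = (k' - 1) * τ + i') : k = k' ∧ i = i' := by
  have e1 : (k - 1) * τ + τ = k * τ := by
    have : k - 1 + 1 = k := by omega
    calc (k - 1) * τ + τ = (k - 1 + 1) * τ := by ring
      _ = k * τ := by rw [this]
  have e1' : (k' - 1) * τ + τ = k' * τ := by
    have : k' - 1 + 1 = k' := by omega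
    calc (k' - 1) * τ + τ = (k' - 1 + 1) * τ := by ring
      _ = k' * τ := by rw [this]
  rcases lt_trichotomy k k' with hlt | heq | hgt
  · exfalso
    have h2 : k * τ ≤ (k' - 1) * τ := Nat.mul_le_mul_right τ (by omega)
    omega
  · constructor
    · exact heq
    · subst heq; omega
  · exfalso
    have h2 : k' * τ ≤ (k - 1) * τ := Nat.mul_le_mul_right τ (by omega)
    omega

private lemma fiber_bound {X : Type*} (τ : ℕ) (hτ : 0 < τ)
    (x : ℕ → X) (y : X) (d ε : ℝ) (hd : 0 < d) (hε : 0 < ε)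
    (S : Finset (ℕ × ℕ))
    (hS : ∀ ki ∈ S, 1 ≤ ki.1 ∧ 1 ≤ ki.2 ∧ ki.2 ≤ τ ∧
      x ((ki.1 - 1) * τ + ki.2) = y ∧
      cnt x y ((ki.1 - 1) * τ - 1) ≠ 0 ∧
      d ≤ (cnt x y ((ki.1 - 1) * τ - 1) : ℝ) * ε ^ 2 ∧
      d > ((cnt x y ((ki.1 - 1) * τ - 1) : ℝ) - τ) * ε ^ 2) :
    S.card ≤ 2 * τ := by
  classical
  set A₀ : ℕ := ⌈d / ε ^ 2⌉₊ with hA₀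
  have hε2 : (0:ℝ) < ε ^ 2 := by positivity
  -- bounds on the count n for each element
  have hnb : ∀ ki ∈ S, A₀ ≤ cnt x y ((ki.1 - 1) * τ - 1) ∧
      cnt x y ((ki.1 - 1) * τ - 1) < A₀ + τ := by
    intro ki hki
    obtain ⟨hk, hi1, hi2, hxy, hn0, hle, hgt⟩ := hS ki hki
    set n := cnt x y ((ki.1 - 1) * τ - 1) with hn
    constructor
    · exact Nat.ceil_le.mpr ((div_le_iff₀ hε2).mpr hle)
    · have h1 : (n : ℝ) - τ < d / ε ^ 2 := (lt_div_iff₀ hε2).mpr hgt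
      have h2 : d / ε ^ 2 ≤ (A₀ : ℝ) := Nat.le_ceil _
      have : (n : ℝ) < ((A₀ + τ : ℕ) : ℝ) := by push_cast; linarith
      exact_mod_cast this
  have hu1 : ∀ ki ∈ S, 1 ≤ (ki.1 - 1) * τ := by
    intro ki hki
    obtain ⟨hk, hi1, hi2, hxy, hn0, hle, hgt⟩ := hS ki hki
    by_contra h
    have : (ki.1 - 1) * τ = 0 := by omega
    rw [this] at hn0
    simp [cnt_zero] at hn0
  have key : S.card ≤ (Finset.Icc (A₀ + 1) (A₀ + 2 * τ)).card := by
    apply Finset.card_le_card_of_injOn (fun ki => cnt x y ((ki.1 - 1) * τ + ki.2))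
    · intro ki hki
      obtain ⟨hk, hi1, hi2, hxy, hn0, hle, hgt⟩ := hS ki hki
      obtain ⟨hnlo, hnhi⟩ := hnb ki hki
      have hu := hu1 ki hki
      set u := (ki.1 - 1) * τ with hu'
      set n := cnt x y (u - 1) with hn
      rw [Finset.mem_coe, Finset.mem_Icc]
      show A₀ + 1 ≤ cnt x y (u + ki.2) ∧ cnt x y (u + ki.2) ≤ A₀ + 2 * τ
      constructor
      · -- lower bound
        have h1 : cnt x y (u + ki.2 - 1) + 1 ≤ cnt x y (u + ki.2) :=
          cnt_visit x y (by omega) hxy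
        have h2 : n ≤ cnt x y (u + ki.2 - 1) := cnt_mono x y (by omega)
        omega
      · -- upper bound
        have h3 : u + ki.2 = (u - 1) + (ki.2 + 1) := by omega
        have h4 : cnt x y (u + ki.2) ≤ n + (ki.2 + 1) := by
          rw [h3]; exact cnt_lip x y _ _
        omega
    · intro a ha b hb hfab
      by_contra hne
      obtain ⟨hka, hia1, hia2, hxa, -, -, -⟩ := hS a ha
      obtain ⟨hkb, hib1, hib2, hxb, -, -, -⟩ := hS b hb
      have hTne : (a.1 - 1) * τ + a.2 ≠ (b.1 - 1) * τ + b.2 := by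
        intro h
        obtain ⟨h1, h2⟩ := idx_inj hka hkb hia1 hia2 hib1 hib2 h
        exact hne (Prod.ext h1 h2)
      rcases lt_or_gt_of_ne hTne with hlt | hgt'
      · exact absurd hfab (Nat.ne_of_lt (cnt_strict x y hlt hxb))
      · exact absurd hfab (Nat.ne_of_gt (cnt_strict x y hgt' hxa))
  rw [Nat.card_Icc] at key
  omega

/-- Corollary 3 (episodic concentration for √(d/n_{t_k}(x))): with episode starts
t_k = (k−1)·τ, counts n_t(x) := |{s < t : x_s = x}|, h(d,ε) := √(dε²/(d+ε²)) and
h^{(τ)}(d,·) its τ-fold composition, the number of pairs (k,i) with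
√(d/n_{t_k}(x_{t_k+i})) > h^{(τ)}(d,ε) exceeds the number with
√(d/n_{t_k}(x_{t_k+i})) > ε by at most 2τ|X|.  √(d/n) > c is written as
n = 0 ∨ d > n·c². -/
theorem count_large_ratio_episodic_le
    {X : Type*} [Fintype X] (M τ : ℕ) (hM : 0 < M) (hτ : 0 < τ)
    (x : ℕ → X) (d ε : ℝ) (hd : 0 < d) (hε : 0 < ε) :
    (((Finset.Icc 1 M) ×ˢ (Finset.Icc 1 τ)).filter (fun ki =>
        ((Finset.Ico 1 ((ki.1 - 1) * τ)).filter
            (fun s => x s = x ((ki.1 - 1) * τ + ki.2))).card = 0 ∨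
        d > (((Finset.Ico 1 ((ki.1 - 1) * τ)).filter
            (fun s => x s = x ((ki.1 - 1) * τ + ki.2))).card : ℝ)
              * ((fun e : ℝ => Real.sqrt (d * e ^ 2 / (d + e ^ 2)))^[τ] ε) ^ 2)).card
    ≤ (((Finset.Icc 1 M) ×ˢ (Finset.Icc 1 τ)).filter (fun ki =>
        ((Finset.Ico 1 ((ki.1 - 1) * τ)).filter
            (fun s => x s = x ((ki.1 - 1) * τ + ki.2))).card = 0 ∨
        d > (((Finset.Ico 1 ((ki.1 - 1) * τ)).filter
            (fun s => x s = x ((ki.1 - 1) * τ + ki.2))).card : ℝ) * ε ^ 2)).card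
      + 2 * τ * Fintype.card X := by
  classical
  set P := (Finset.Icc 1 M) ×ˢ (Finset.Icc 1 τ) with hP
  set n : ℕ × ℕ → ℕ := fun ki => ((Finset.Ico 1 ((ki.1 - 1) * τ)).filter
      (fun s => x s = x ((ki.1 - 1) * τ + ki.2))).card with hn
  -- rewrite the LHS predicate
  have hA : P.filter (fun ki =>
        n ki = 0 ∨
        d > (n ki : ℝ) * ((fun e : ℝ => Real.sqrt (d * e ^ 2 / (d + e ^ 2)))^[τ] ε) ^ 2)
      = P.filter (fun ki => d > ((n ki : ℝ) - τ) * ε ^ 2) := by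
    apply Finset.filter_congr
    intro ki _
    constructor
    · rintro (h0 | h1)
      · rw [h0]
        push_cast
        nlinarith [mul_nonneg (Nat.cast_nonneg τ : (0:ℝ) ≤ (τ:ℝ)) (sq_nonneg ε)]
      · exact (iter_iff hd hε τ _).mp h1
    · intro h
      exact Or.inr ((iter_iff hd hε τ _).mpr h)
  rw [show (P.filter (fun ki =>
        ((Finset.Ico 1 ((ki.1 - 1) * τ)).filter
            (fun s => x s = x ((ki.1 - 1) * τ + ki.2))).card = 0 ∨
        d > (((Finset.Ico 1 ((ki.1 - 1) * τ)).filter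
            (fun s => x s = x ((ki.1 - 1) * τ + ki.2))).card : ℝ)
              * ((fun e : ℝ => Real.sqrt (d * e ^ 2 / (d + e ^ 2)))^[τ] ε) ^ 2))
      = P.filter (fun ki => d > ((n ki : ℝ) - τ) * ε ^ 2) from hA]
  set pB : ℕ × ℕ → Prop := fun ki => n ki = 0 ∨ d > (n ki : ℝ) * ε ^ 2 with hpB
  set A' := P.filter (fun ki => d > ((n ki : ℝ) - τ) * ε ^ 2) with hA'
  have hsplit : (A'.filter pB).card + (A'.filter (fun ki => ¬ pB ki)).card = A'.card :=
    Finset.card_filter_add_card_filter_not _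
  have hsub : A'.filter pB ⊆ P.filter pB := by
    apply Finset.filter_subset_filter
    exact Finset.filter_subset _ _
  have hBad : (A'.filter (fun ki => ¬ pB ki)).card ≤ 2 * τ * Fintype.card X := by
    set Bad := A'.filter (fun ki => ¬ pB ki) with hBadDef
    have hfib : Bad.card = ∑ y ∈ Finset.univ,
        (Bad.filter (fun ki => x ((ki.1 - 1) * τ + ki.2) = y)).card :=
      Finset.card_eq_sum_card_fiberwise (fun a _ => Finset.mem_univ _)
    have hyb : ∀ y : X,
        (Bad.filter (fun ki => x ((ki.1 - 1) * τ + ki.2) = y)).card ≤ 2 * τ := by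
      intro y
      apply fiber_bound τ hτ x y d ε hd hε
      intro ki hki
      rw [Finset.mem_filter] at hki
      obtain ⟨hki1, hxy⟩ := hki
      rw [hBadDef, Finset.mem_filter] at hki1
      obtain ⟨hki2, hnB⟩ := hki1
      rw [hA', Finset.mem_filter] at hki2
      obtain ⟨hkiP, hgt⟩ := hki2
      rw [hP, Finset.mem_product, Finset.mem_Icc, Finset.mem_Icc] at hkiP
      obtain ⟨⟨hk1, hk2⟩, hi1, hi2⟩ := hkiP
      have hcnt : n ki = cnt x y ((ki.1 - 1) * τ - 1) := by
        show ((Finset.Ico 1 ((ki.1 - 1) * τ)).filter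
            (fun s => x s = x ((ki.1 - 1) * τ + ki.2))).card = _
        simp only [hxy]
        exact Ico_count x y _
      simp only [hpB] at hnB
      push_neg at hnB
      obtain ⟨hn0, hle⟩ := hnB
      rw [hcnt] at hn0 hle hgt
      exact ⟨hk1, hi1, hi2, hxy, hn0, hle, hgt⟩
    calc Bad.card = _ := hfib
      _ ≤ ∑ _y ∈ (Finset.univ : Finset X), 2 * τ :=
          Finset.sum_le_sum (fun y _ => hyb y)
      _ = Fintype.card X * (2 * τ) := by
          rw [Finset.sum_const, smul_eq_mul, Finset.card_univ]
      _ = 2 * τ * Fintype.card X := by ring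
  calc A'.card = (A'.filter pB).card + (A'.filter (fun ki => ¬ pB ki)).card := hsplit.symm
    _ ≤ (P.filter pB).card + 2 * τ * Fintype.card X :=
        Nat.add_le_add (Finset.card_le_card hsub) hBad
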